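/- Let ω = (ρ, θ, ρ̃, θ̃, ι) and let h = z^{-1} z̃ ∈ G(ω). Then h normalizes the amalgamated subgroup: h^{-1} A h = A, where A denotes the common image of H and of H̃ in G(ω). -/

import Mathlib

/-- `ℤ* = ℤ \ {0}`. -/
abbrev Zstar : Type := {n : ℤ // n ≠ 0}

/-- Index set for the free basis `S` (and `S̃`): `(j, l, b)` with `b = false` for `v_j^l`
and `b = true` for `w_j^l`. -/
abbrev SIdx : Type := Zstar × ℤ × Bool

/-- The free group on three generators `x, y, z`. -/
abbrev F3 : Type := FreeGroup (Fin 3)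

/-- The generator `x`. -/
def gx : F3 := FreeGroup.of 0
/-- The generator `y`. -/
def gy : F3 := FreeGroup.of 1
/-- The generator `z`. -/
def gz : F3 := FreeGroup.of 2

/-- `v_j^l = z^{-l} x^j y^{-ρ(j)} z^l`. -/
def vgen (ρ : Equiv.Perm Zstar) (j : Zstar) (l : ℤ) : F3 :=
  gz ^ (-l) * gx ^ j.val * gy ^ (-(ρ j).val) * gz ^ l

/-- `w_j^l = z^{-l} x^j z y^{-θ(j)} z^l`. -/
def wgen (θ : Equiv.Perm Zstar) (j : Zstar) (l : ℤ) : F3 :=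
  gz ^ (-l) * gx ^ j.val * gz * gy ^ (-(θ j).val) * gz ^ l

/-- The element of `S` indexed by `(j, l, b)`. -/
def sElem (ρ θ : Equiv.Perm Zstar) (p : SIdx) : F3 :=
  if p.2.2 then wgen θ p.1 p.2.1 else vgen ρ p.1 p.2.1

/-- The canonical homomorphism from the free group on the index set of `S` to `F`,
sending `(j,l,false) ↦ v_j^l` and `(j,l,true) ↦ w_j^l`. -/
def sMap (ρ θ : Equiv.Perm Zstar) : FreeGroup SIdx →* F3 :=
  FreeGroup.lift (sElem ρ θ)

/-- `H = ⟨S⟩ ≤ F`. -/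
def Hsub (ρ θ : Equiv.Perm Zstar) : Subgroup F3 :=
  Subgroup.closure (Set.range (sElem ρ θ))

/-- The tuple `ω = (ρ, θ, ρ̃, θ̃, ι)`; the bijection `ι : S → S̃` is recorded as a bijection
of the index sets. -/
structure OmegaTuple : Type where
  ρ : Equiv.Perm Zstar
  θ : Equiv.Perm Zstar
  ρt : Equiv.Perm Zstar
  θt : Equiv.Perm Zstar
  ι : SIdx ≃ SIdx

/-- The two maps from the abstract copy of `H` (the free group on the index set of `S`)
into the two copies of `F₃`: into `F` via `S`, and into `F̃` via `ι` followed by `S̃`. -/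
def pushMaps (ω : OmegaTuple) : Bool → (FreeGroup SIdx →* F3) :=
  fun b => if b then (sMap ω.ρt ω.θt).comp (FreeGroup.map ω.ι) else sMap ω.ρ ω.θ

/-- `G(ω) = F *_{H = H̃} F̃`, the amalgamated product. -/
def GroupOmega (ω : OmegaTuple) : Type := Monoid.PushoutI (pushMaps ω)

instance (ω : OmegaTuple) : Group (GroupOmega ω) := by
  delta GroupOmega; infer_instance

/-- The canonical map `F → G(ω)`. -/
def ofb (ω : OmegaTuple) : F3 →* GroupOmega ω := Monoid.PushoutI.of (φ := pushMaps ω) false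

/-- The canonical map `F̃ → G(ω)`. -/
def oft (ω : OmegaTuple) : F3 →* GroupOmega ω := Monoid.PushoutI.of (φ := pushMaps ω) true

/-- `c_{l,j} = z^l x^j`. -/
def cElem (l j : ℤ) : F3 := gz ^ l * gx ^ j

/-- `d_{M,M'}^l = v_M^l (v_{M'}^l)⁻¹`. -/
def dElem (ρ : Equiv.Perm Zstar) (M M' : Zstar) (l : ℤ) : F3 :=
  vgen ρ M l * (vgen ρ M' l)⁻¹

/-- The index `(j,l,b)` corresponds to an element of `S_N` (resp. `S̃_N`):
`j ∈ [-N,N] ∩ ℤ*` and `l ∈ [-N,N]`. -/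
def InSN (N : ℤ) (p : SIdx) : Prop :=
  p.1.val ∈ Set.Icc (-N) N ∧ p.2.1 ∈ Set.Icc (-N) N

/-- A (total) map `g` extends a partial bijection `f`. -/
def Extends {α β : Type*} (g : α → β) (f : PartialEquiv α β) : Prop :=
  ∀ a ∈ f.source, g a = f a

/-- A partial bijection of `ℤ*` is independent from `[-N, N]`: its domain and image
are disjoint from `[-N, N]`. -/
def IndepFromIcc (f : PartialEquiv Zstar Zstar) (N : ℤ) : Prop :=
  (∀ a ∈ f.source, a.val ∉ Set.Icc (-N) N) ∧ (∀ a ∈ f.target, a.val ∉ Set.Icc (-N) N)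

/-- A partial bijection of the index set is independent from `(S_N, S̃_N)`:
its domain misses `S_N` and its image misses `S̃_N`. -/
def IndepFromSN (f : PartialEquiv SIdx SIdx) (N : ℤ) : Prop :=
  (∀ p ∈ f.source, ¬ InSN N p) ∧ (∀ p ∈ f.target, ¬ InSN N p)

lemma conj_sElem_left (ρ θ : Equiv.Perm Zstar) (p : SIdx) :
    gz * sElem ρ θ p * gz⁻¹ = sElem ρ θ (p.1, p.2.1 - 1, p.2.2) := by
  obtain ⟨j, l, b⟩ := p
  cases b <;> simp only [sElem, vgen, wgen, if_true, if_false, Bool.false_eq_true] <;> group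

lemma conj_sElem_right (ρ θ : Equiv.Perm Zstar) (p : SIdx) :
    gz⁻¹ * sElem ρ θ p * gz = sElem ρ θ (p.1, p.2.1 + 1, p.2.2) := by
  obtain ⟨j, l, b⟩ := p
  cases b <;> simp only [sElem, vgen, wgen, if_true, if_false, Bool.false_eq_true] <;> group

lemma Hconj (ρ θ : Equiv.Perm Zstar) :
    (Hsub ρ θ).map (MulAut.conj gz).toMonoidHom = Hsub ρ θ := by
  unfold Hsub
  rw [MonoidHom.map_closure]
  congr 1
  rw [← Set.range_comp]
  have : (MulAut.conj gz).toMonoidHom ∘ sElem ρ θ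
      = sElem ρ θ ∘ (fun p : SIdx => (p.1, p.2.1 - 1, p.2.2)) := by
    funext p
    simpa [MulAut.conj_apply] using conj_sElem_left ρ θ p
  rw [this, Set.range_comp]
  have hsurj : Function.Surjective (fun p : SIdx => (p.1, p.2.1 - 1, p.2.2)) := by
    intro q; exact ⟨(q.1, q.2.1 + 1, q.2.2), by simp⟩
  rw [Set.range_eq_univ.2 hsurj, Set.image_univ]

lemma conj_mem_Hsub (ρ θ : Equiv.Perm Zstar) {m : F3} (hm : m ∈ Hsub ρ θ) :
    gz * m * gz⁻¹ ∈ Hsub ρ θ := by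
  rw [← Hconj ρ θ]
  exact ⟨m, hm, rfl⟩

lemma conj_mem_Hsub' (ρ θ : Equiv.Perm Zstar) {m : F3} (hm : m ∈ Hsub ρ θ) :
    gz⁻¹ * m * gz ∈ Hsub ρ θ := by
  rw [← Hconj ρ θ] at hm
  obtain ⟨m', hm', rfl⟩ := hm
  simpa [MulAut.conj_apply, mul_assoc] using hm'

lemma key_eq (ω : OmegaTuple) (p : SIdx) :
    ofb ω (sElem ω.ρ ω.θ p) = oft ω (sElem ω.ρt ω.θt (ω.ι p)) := by
  have h1 := Monoid.PushoutI.of_comp_eq_base (φ := pushMaps ω) false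
  have h2 := Monoid.PushoutI.of_comp_eq_base (φ := pushMaps ω) true
  have e1 : ofb ω (sElem ω.ρ ω.θ p)
      = Monoid.PushoutI.base (pushMaps ω) (FreeGroup.of p) := by
    have := congrFun (congrArg DFunLike.coe h1) (FreeGroup.of p)
    simp [ofb, pushMaps, sMap] at this
    exact this
  have e2 : oft ω (sElem ω.ρt ω.θt (ω.ι p))
      = Monoid.PushoutI.base (pushMaps ω) (FreeGroup.of p) := by
    have := congrFun (congrArg DFunLike.coe h2) (FreeGroup.of p)
    simp [oft, pushMaps, sMap] at this
    exact this
  rw [e1, e2]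

/-- the element `h = z⁻¹ z̃ ∈ G(ω)` normalizes the amalgamated subgroup
`A`, the common image of `H` and `H̃` in `G(ω)`: `h⁻¹ A h = A`. -/
theorem stmt16 (ω : OmegaTuple) :
    (Hsub ω.ρ ω.θ).map (ofb ω) = (Hsub ω.ρt ω.θt).map (oft ω) ∧
    (fun a => (ofb ω gz⁻¹ * oft ω gz)⁻¹ * a * (ofb ω gz⁻¹ * oft ω gz)) ''
        ((Hsub ω.ρ ω.θ).map (ofb ω) : Set (GroupOmega ω)) =
      ((Hsub ω.ρ ω.θ).map (ofb ω) : Set (GroupOmega ω)) := by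
  have part1 : (Hsub ω.ρ ω.θ).map (ofb ω) = (Hsub ω.ρt ω.θt).map (oft ω) := by
    unfold Hsub
    rw [MonoidHom.map_closure, MonoidHom.map_closure]
    congr 1
    rw [← Set.range_comp, ← Set.range_comp]
    have hc : (ofb ω : F3 → GroupOmega ω) ∘ sElem ω.ρ ω.θ
        = ((oft ω : F3 → GroupOmega ω) ∘ sElem ω.ρt ω.θt) ∘ ω.ι :=
      funext (key_eq ω)
    rw [hc, Function.Surjective.range_comp ω.ι.surjective]
  refine ⟨part1, ?_⟩
  set t : GroupOmega ω := ofb ω gz⁻¹ * oft ω gz with ht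
  have fwd : ∀ a ∈ (Hsub ω.ρ ω.θ).map (ofb ω),
      t⁻¹ * a * t ∈ (Hsub ω.ρ ω.θ).map (ofb ω) := by
    rintro a ⟨m, hm, rfl⟩
    have h1 : ofb ω (gz * m * gz⁻¹) ∈ (Hsub ω.ρt ω.θt).map (oft ω) := by
      rw [← part1]; exact ⟨_, conj_mem_Hsub _ _ hm, rfl⟩
    obtain ⟨m', hm', hmeq⟩ := h1
    have key : t⁻¹ * ofb ω m * t = oft ω (gz⁻¹ * m' * gz) := by
      rw [ht]
      simp only [map_mul, map_inv] at hmeq ⊢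
      rw [hmeq]
      group
    rw [key, part1]
    exact ⟨_, conj_mem_Hsub' _ _ hm', rfl⟩
  have bwd : ∀ a ∈ (Hsub ω.ρ ω.θ).map (ofb ω),
      t * a * t⁻¹ ∈ (Hsub ω.ρ ω.θ).map (ofb ω) := by
    intro a ha
    rw [part1] at ha
    obtain ⟨m', hm', rfl⟩ := ha
    have h1 : oft ω (gz * m' * gz⁻¹) ∈ (Hsub ω.ρ ω.θ).map (ofb ω) := by
      rw [part1]; exact ⟨_, conj_mem_Hsub _ _ hm', rfl⟩
    obtain ⟨m, hm, hmeq⟩ := h1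
    have key : t * oft ω m' * t⁻¹ = ofb ω (gz⁻¹ * m * gz) := by
      rw [ht]
      simp only [map_mul, map_inv] at hmeq ⊢
      rw [hmeq]
      group
    rw [key]
    exact ⟨_, conj_mem_Hsub' _ _ hm, rfl⟩
  ext x
  constructor
  · rintro ⟨a, ha, rfl⟩
    exact fwd a ha
  · intro hx
    refine ⟨t * x * t⁻¹, bwd x hx, ?_⟩
    group
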